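/- Let τ_M > 0, τ_T > 0 and a_M ≥ a_T > 0 with a_M·τ_T ≥ a_T·τ_M (i.e., the pursuer has maneuverability ratio μ = a_M/a_T ≥ 1 and agility ratio μ·ε = (a_M·τ_T)/(a_T·τ_M) ≥ 1). Then for every t ≥ 0 the singular-region boundary is nonnegative: ∂Z*(t) = a_M·τ_M²·Υ(t/τ_M) − a_T·τ_T²·Υ(t/τ_T) ≥ 0. -/

import Mathlib

/-- Υ(θ) = θ²/2 − exp(−θ) − θ + 1 -/
noncomputable def Upsilon (θ : ℝ) : ℝ := θ ^ 2 / 2 - Real.exp (-θ) - θ + 1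

-- auxiliary lemmas
lemma expneg_deriv (x : ℝ) : HasDerivAt (fun x : ℝ => Real.exp (-x)) (-Real.exp (-x)) x := by
  simpa [Function.comp_def] using (Real.hasDerivAt_exp (-x)).comp x (hasDerivAt_neg x)

lemma aux1 (x : ℝ) (hx : 0 ≤ x) : (1 + x) * Real.exp (-x) ≤ 1 := by
  have h := Real.add_one_le_exp x
  have h2 : (1 + x) * Real.exp (-x) ≤ Real.exp x * Real.exp (-x) :=
    mul_le_mul_of_nonneg_right (by linarith) (Real.exp_nonneg _)
  rwa [← Real.exp_add, add_neg_cancel, Real.exp_zero] at h2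

lemma chi'_nonneg (x : ℝ) (hx : 0 ≤ x) : 0 ≤ x - 2 + (2 + x) * Real.exp (-x) := by
  set g : ℝ → ℝ := fun x => x - 2 + (2 + x) * Real.exp (-x) with hg
  have hd : ∀ x : ℝ, HasDerivAt g (1 - (1 + x) * Real.exp (-x)) x := by
    intro x
    have h := ((hasDerivAt_id x).sub_const 2).add
      (((hasDerivAt_id x).const_add 2).mul (expneg_deriv x))
    simp only [id_eq, Pi.add_def, Pi.sub_def, Pi.mul_def] at h
    refine h.congr_deriv ?_; ring
  have hm : MonotoneOn g (Set.Ici 0) := by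
    apply monotoneOn_of_deriv_nonneg (convex_Ici 0)
    · exact fun x _ => (hd x).continuousAt.continuousWithinAt
    · intro x _; exact (hd x).differentiableAt.differentiableWithinAt
    · intro x hxm
      rw [interior_Ici] at hxm
      rw [(hd x).deriv]
      linarith [aux1 x hxm.le]
  have := hm Set.self_mem_Ici hx hx
  simpa [hg] using this

lemma chi_nonneg (x : ℝ) (hx : 0 ≤ x) : 0 ≤ x ^ 2 / 2 - 2 * x + 3 - (3 + x) * Real.exp (-x) := by
  set g : ℝ → ℝ := fun x => x ^ 2 / 2 - 2 * x + 3 - (3 + x) * Real.exp (-x) with hg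
  have hd : ∀ x : ℝ, HasDerivAt g (x - 2 + (2 + x) * Real.exp (-x)) x := by
    intro x
    have h := ((((hasDerivAt_pow 2 x).div_const 2).sub ((hasDerivAt_id x).const_mul 2)).add_const 3).sub
      (((hasDerivAt_id x).const_add 3).mul (expneg_deriv x))
    simp only [id_eq, Pi.add_def, Pi.sub_def, Pi.mul_def] at h
    refine h.congr_deriv ?_; push_cast; ring
  have hm : MonotoneOn g (Set.Ici 0) := by
    apply monotoneOn_of_deriv_nonneg (convex_Ici 0)
    · exact fun x _ => (hd x).continuousAt.continuousWithinAt
    · intro x _; exact (hd x).differentiableAt.differentiableWithinAt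
    · intro x hxm
      rw [interior_Ici] at hxm
      rw [(hd x).deriv]
      exact chi'_nonneg x hxm.le
  have := hm Set.self_mem_Ici hx hx
  simpa [hg] using this

lemma upsilon_deriv (x : ℝ) : HasDerivAt Upsilon (x + Real.exp (-x) - 1) x := by
  have h := ((((hasDerivAt_pow 2 x).div_const 2).sub (expneg_deriv x)).sub (hasDerivAt_id x)).add_const 1
  simp only [id_eq, Pi.add_def, Pi.sub_def, Pi.mul_def] at h
  have h2 : HasDerivAt (fun θ : ℝ => θ ^ 2 / 2 - Real.exp (-θ) - θ + 1) (x + Real.exp (-x) - 1) x := by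
    refine h.congr_deriv ?_; push_cast; ring
  exact h2

lemma upsilon_nonneg (x : ℝ) (hx : 0 ≤ x) : 0 ≤ Upsilon x := by
  have hm : MonotoneOn Upsilon (Set.Ici 0) := by
    apply monotoneOn_of_deriv_nonneg (convex_Ici 0)
    · exact fun x _ => (upsilon_deriv x).continuousAt.continuousWithinAt
    · intro x _; exact (upsilon_deriv x).differentiableAt.differentiableWithinAt
    · intro x hxm
      rw [interior_Ici] at hxm
      rw [(upsilon_deriv x).deriv]
      have := Real.add_one_le_exp (-x)
      linarith
  have := hm Set.self_mem_Ici hx hx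
  simpa [Upsilon] using this

lemma key2 {y x : ℝ} (hy : 0 < y) (hxy : y ≤ x) : Upsilon y / y ^ 2 ≤ Upsilon x / x ^ 2 := by
  have hm : MonotoneOn (fun x => Upsilon x / x ^ 2) (Set.Ioi 0) := by
    apply monotoneOn_of_deriv_nonneg (convex_Ioi 0)
    · intro x hx
      have hx0 : x ≠ 0 := ne_of_gt hx
      exact ((upsilon_deriv x).div (hasDerivAt_pow 2 x) (pow_ne_zero 2 hx0)).continuousAt.continuousWithinAt
    · intro x hx
      rw [interior_Ioi] at hx
      exact ((upsilon_deriv x).div (hasDerivAt_pow 2 x) (pow_ne_zero 2 (ne_of_gt hx))).differentiableAt.differentiableWithinAt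
    · intro x hx
      rw [interior_Ioi] at hx
      erw [((upsilon_deriv x).div (hasDerivAt_pow 2 x) (pow_ne_zero 2 (ne_of_gt hx))).deriv]
      apply div_nonneg _ (by positivity)
      have h := chi'_nonneg x hx.le
      simp only [Upsilon]
      nlinarith [(Set.mem_Ioi.1 hx).le, mul_nonneg (Set.mem_Ioi.1 hx).le h]
  exact hm (Set.mem_Ioi.2 hy) (Set.mem_Ioi.2 (lt_of_lt_of_le hy hxy)) hxy

lemma key3 {y x : ℝ} (hy : 0 < y) (hxy : y ≤ x) : Upsilon x / x ^ 3 ≤ Upsilon y / y ^ 3 := by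
  have hm : AntitoneOn (fun x => Upsilon x / x ^ 3) (Set.Ioi 0) := by
    apply antitoneOn_of_deriv_nonpos (convex_Ioi 0)
    · intro x hx
      exact ((upsilon_deriv x).div (hasDerivAt_pow 3 x) (pow_ne_zero 3 (ne_of_gt hx))).continuousAt.continuousWithinAt
    · intro x hx
      rw [interior_Ioi] at hx
      exact ((upsilon_deriv x).div (hasDerivAt_pow 3 x) (pow_ne_zero 3 (ne_of_gt hx))).differentiableAt.differentiableWithinAt
    · intro x hx
      rw [interior_Ioi] at hx
      erw [((upsilon_deriv x).div (hasDerivAt_pow 3 x) (pow_ne_zero 3 (ne_of_gt hx))).deriv]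
      apply div_nonpos_of_nonpos_of_nonneg _ (by positivity)
      have h := chi_nonneg x hx.le
      simp only [Upsilon]
      nlinarith [sq_nonneg x, mul_nonneg (sq_nonneg x) h]
  exact hm (Set.mem_Ioi.2 hy) (Set.mem_Ioi.2 (lt_of_lt_of_le hy hxy)) hxy

/-- The singular-region boundary ∂Z*(s) = a_M·τ_M²·Υ(s/τ_M) − a_T·τ_T²·Υ(s/τ_T). -/
noncomputable def singBdry (aM aT τM τT s : ℝ) : ℝ :=
  aM * τM ^ 2 * Upsilon (s / τM) - aT * τT ^ 2 * Upsilon (s / τT)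

/-- If the pursuer has maneuverability superiority (a_M ≥ a_T > 0) and agility
superiority (a_M·τ_T ≥ a_T·τ_M), then the singular-region boundary is nonnegative for
all t ≥ 0: ∂Z*(t) = a_M·τ_M²·Υ(t/τ_M) − a_T·τ_T²·Υ(t/τ_T) ≥ 0. -/
theorem singBdry_nonneg
    (τM τT aM aT : ℝ) (hτM : 0 < τM) (hτT : 0 < τT)
    (haT : 0 < aT) (haM : aT ≤ aM) (hagil : aT * τM ≤ aM * τT) :
    ∀ t : ℝ, 0 ≤ t → 0 ≤ singBdry aM aT τM τT t := by
  intro t ht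
  rcases eq_or_lt_of_le ht with rfl | ht
  · simp [singBdry, Upsilon]
  · have hx : 0 < t / τM := div_pos ht hτM
    have hy : 0 < t / τT := div_pos ht hτT
    have hUx : 0 ≤ Upsilon (t / τM) := upsilon_nonneg _ hx.le
    rcases le_total τM τT with h | h
    · -- y = t/τT ≤ x = t/τM, use key2
      have hxy : t / τT ≤ t / τM := div_le_div_of_nonneg_left ht.le hτM h
      have k := key2 hy hxy
      rw [div_le_div_iff₀ (by positivity) (by positivity)] at k
      -- k : Upsilon (t/τT) * (t/τM)^2 ≤ Upsilon (t/τM) * (t/τT)^2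
      have k2 : τT ^ 2 * Upsilon (t / τT) ≤ τM ^ 2 * Upsilon (t / τM) := by
        rw [div_pow, div_pow] at k
        have hM2 : (0:ℝ) < τM ^ 2 := by positivity
        have hT2 : (0:ℝ) < τT ^ 2 := by positivity
        have ht2 : (0:ℝ) < t ^ 2 := by positivity
        rw [← mul_div_assoc, ← mul_div_assoc, div_le_div_iff₀ hM2 hT2] at k
        nlinarith [ht2, mul_pos hM2 hT2]
      simp only [singBdry]
      nlinarith [mul_nonneg (sub_nonneg.2 haM) (mul_nonneg (sq_nonneg τM) hUx)]
    · -- x = t/τM ≤ y = t/τT, use key3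
      have hxy : t / τM ≤ t / τT := div_le_div_of_nonneg_left ht.le hτT h
      have k := key3 hx hxy
      -- k : Upsilon (t/τT) / (t/τT)^3 ≤ Upsilon (t/τM) / (t/τM)^3
      rw [div_le_div_iff₀ (by positivity) (by positivity)] at k
      have k3 : τT ^ 3 * Upsilon (t / τT) ≤ τM ^ 3 * Upsilon (t / τM) := by
        rw [div_pow, div_pow] at k
        have hM3 : (0:ℝ) < τM ^ 3 := by positivity
        have hT3 : (0:ℝ) < τT ^ 3 := by positivity
        have ht3 : (0:ℝ) < t ^ 3 := by positivity
        rw [← mul_div_assoc, ← mul_div_assoc, div_le_div_iff₀ hM3 hT3] at k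
        nlinarith [ht3, mul_pos hM3 hT3]
      simp only [singBdry]
      nlinarith [mul_le_mul_of_nonneg_left k3 haT.le,
        mul_nonneg (mul_nonneg (sub_nonneg.2 hagil) (sq_nonneg τM)) hUx,
        mul_pos hτT (mul_pos hτM hτM)]
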